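/- For every integer n ≥ 0, the rational number D_n³ · â_n is an integer, where â_n = Σ_{k=0}^n (n choose k)²((n+k) choose k)² · ( Σ_{m=1}^n 1/m³ + Σ_{m=1}^k (−1)^{m−1} / (2m³ · (n choose m) · ((n+m) choose n)) ). -/

import Mathlib

/-- `D n = lcm {1, 2, …, n}`, with `D 0 = 1`. -/
def D (n : ℕ) : ℕ := (Finset.Icc 1 n).lcm id

lemma dvd_D {m n : ℕ} (h1 : 1 ≤ m) (h2 : m ≤ n) : m ∣ D n :=
  Finset.dvd_lcm (by simp [Finset.mem_Icc, h1, h2])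

lemma D_dvd_D {k n : ℕ} (h : k ≤ n) : D k ∣ D n :=
  Finset.lcm_dvd fun i hi => by
    rw [Finset.mem_Icc] at hi
    exact Finset.dvd_lcm (Finset.mem_Icc.mpr ⟨hi.1, hi.2.trans h⟩)

lemma D_pos (n : ℕ) : 0 < D n := by
  rw [Nat.pos_iff_ne_zero]
  intro h
  rw [D, Finset.lcm_eq_zero_iff] at h
  obtain ⟨i, hi, hi0⟩ := h
  simp only [Finset.coe_Icc, Set.mem_Icc, id, Finset.mem_coe, Finset.mem_Icc] at hi hi0
  omega

/-- predicate: a rational is an integer -/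
def IsIntQ (q : ℚ) : Prop := ∃ z : ℤ, q = (z : ℚ)

lemma IsIntQ.add {a b : ℚ} (ha : IsIntQ a) (hb : IsIntQ b) : IsIntQ (a + b) := by
  obtain ⟨x, rfl⟩ := ha; obtain ⟨y, rfl⟩ := hb; exact ⟨x + y, by push_cast; ring⟩

lemma IsIntQ.mul {a b : ℚ} (ha : IsIntQ a) (hb : IsIntQ b) : IsIntQ (a * b) := by
  obtain ⟨x, rfl⟩ := ha; obtain ⟨y, rfl⟩ := hb; exact ⟨x * y, by push_cast; ring⟩

lemma IsIntQ.natCast (n : ℕ) : IsIntQ (n : ℚ) := ⟨n, by push_cast; ring⟩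

lemma IsIntQ.zero : IsIntQ (0 : ℚ) := ⟨0, by norm_num⟩

lemma IsIntQ.neg_one_pow (j : ℕ) : IsIntQ ((-1 : ℚ) ^ j) := ⟨(-1) ^ j, by push_cast; ring⟩

lemma IsIntQ.sum {ι : Type*} {s : Finset ι} {f : ι → ℚ}
    (h : ∀ i ∈ s, IsIntQ (f i)) : IsIntQ (∑ i ∈ s, f i) :=
  Finset.sum_induction f IsIntQ (fun _ _ => IsIntQ.add) IsIntQ.zero h

lemma IsIntQ.div_of_dvd {a b : ℕ} (h : b ∣ a) : IsIntQ ((a : ℚ) / (b : ℚ)) := by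
  rcases Nat.eq_zero_or_pos b with hb | hb
  · subst hb
    simp [IsIntQ.zero]
  · rw [← Nat.cast_div h (by exact_mod_cast hb.ne')]
    exact IsIntQ.natCast _

lemma nat_dvd_of_isIntQ_div {a b : ℕ} (hb : 0 < b) (h : IsIntQ ((a : ℚ) / (b : ℚ))) :
    b ∣ a := by
  obtain ⟨z, hz⟩ := h
  have hbQ : (b : ℚ) ≠ 0 := by exact_mod_cast hb.ne'
  have h2 : (a : ℚ) = (((b : ℤ) * z : ℤ) : ℚ) := by
    field_simp at hz
    push_cast
    linarith [hz]
  have hZ : (a : ℤ) = (b : ℤ) * z := by exact_mod_cast h2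
  exact Int.natCast_dvd_natCast.mp ⟨z, hZ⟩


lemma apery_inv_sum (s : ℕ) : ∀ m : ℕ, 0 < m →
    ∑ j ∈ Finset.range (s + 1), (-1 : ℚ) ^ j * (s.choose j : ℚ) / ((m : ℚ) + j)
      = 1 / ((m : ℚ) * ((m + s).choose s : ℚ)) := by
  induction s with
  | zero => intro m hm; simp
  | succ s ih =>
    intro m hm
    have hm' : (m : ℚ) ≠ 0 := by positivity
    have A := ih m hm
    have B := ih (m + 1) (by omega)
    push_cast at B
    -- the sum over the shifted binomials
    have hS2 : ∑ i ∈ Finset.range (s + 1),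
          (-1 : ℚ) ^ i * (s.choose (i + 1) : ℚ) / ((m : ℚ) + i + 1)
        = 1 / (m : ℚ) - 1 / ((m : ℚ) * ((m + s).choose s : ℚ)) := by
      have hA' := A
      rw [Finset.sum_range_succ'] at hA'
      push_cast at hA'
      simp only [Nat.choose_zero_right] at hA'
      -- hA' : ∑ i ∈ range s, (-1)^(i+1) * C(s,i+1)/(m + (i+1)) + 1/m-ish = 1/(m*A)
      rw [Finset.sum_range_succ, Nat.choose_succ_self]
      push_cast
      have flip : ∑ i ∈ Finset.range s, (-1 : ℚ) ^ i * (s.choose (i + 1) : ℚ) / ((m : ℚ) + i + 1)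
          = -∑ i ∈ Finset.range s, (-1 : ℚ) ^ (i + 1) * (s.choose (i + 1) : ℚ) / ((m : ℚ) + (i + 1)) := by
        rw [← Finset.sum_neg_distrib]
        apply Finset.sum_congr rfl
        intro i _
        ring
      rw [flip]
      have : ∑ i ∈ Finset.range s, (-1 : ℚ) ^ (i + 1) * (s.choose (i + 1) : ℚ) / ((m : ℚ) + (i + 1))
          = 1 / ((m : ℚ) * ((m + s).choose s : ℚ)) - 1 / m := by
        have h0 : (-1 : ℚ) ^ 0 * ((1:ℕ) : ℚ) / ((m : ℚ) + 0) = 1 / (m : ℚ) := by norm_num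
        linarith [hA', h0]
      rw [this]
      ring
    -- split the big sum
    rw [Finset.sum_range_succ']
    have congr1 : ∀ i ∈ Finset.range (s + 1),
        (-1 : ℚ) ^ (i + 1) * ((s + 1).choose (i + 1) : ℚ) / ((m : ℚ) + (i + 1 : ℕ))
        = -((-1 : ℚ) ^ i * (s.choose i : ℚ) / (((m : ℚ) + 1) + i))
          + -((-1 : ℚ) ^ i * (s.choose (i + 1) : ℚ) / ((m : ℚ) + i + 1)) := by
      intro i _
      rw [Nat.choose_succ_succ]
      have h0 : (m : ℚ) + (i : ℚ) + 1 ≠ 0 := by positivity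
      push_cast
      field_simp
      ring
    rw [Finset.sum_congr rfl congr1, Finset.sum_add_distrib]
    rw [Finset.sum_neg_distrib, Finset.sum_neg_distrib, B, hS2]
    simp only [Nat.choose_zero_right, Nat.cast_zero, Nat.cast_one]
    -- now pure algebra with the two binomial recurrences
    have hA : (0:ℚ) < ((m + s).choose s : ℚ) := by
      exact_mod_cast Nat.choose_pos (by omega)
    have hB : (0:ℚ) < ((m + 1 + s).choose s : ℚ) := by
      exact_mod_cast Nat.choose_pos (by omega)
    have hC : (0:ℚ) < ((m + (s + 1)).choose (s + 1) : ℚ) := by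
      exact_mod_cast Nat.choose_pos (by omega)
    have e1 : ((m : ℚ) + s + 1) * ((m + s).choose s : ℚ)
        = ((s : ℚ) + 1) * ((m + (s + 1)).choose (s + 1) : ℚ) := by
      have h := Nat.add_one_mul_choose_eq (m + s) s
      have h2 : ((m + s).succ * (m + s).choose s : ℕ)
          = ((m + (s + 1)).choose (s + 1) * (s + 1) : ℕ) := by
        rw [h]; congr 2 <;> omega
      have cast1 := congrArg (fun x : ℕ => (x : ℚ)) h2
      push_cast at cast1
      linear_combination cast1
    have e2 : ((m : ℚ) + 1) * ((m + 1 + s).choose s : ℚ)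
        = ((s : ℚ) + 1) * ((m + (s + 1)).choose (s + 1) : ℚ) := by
      have h := Nat.choose_succ_right_eq (m + s + 1) s
      have h2 : ((m + (s + 1)).choose (s + 1) * (s + 1) : ℕ)
          = ((m + 1 + s).choose s * (m + 1) : ℕ) := by
        rw [show m + (s+1) = m + s + 1 by omega, h]
        congr 2 <;> omega
      have cast2 := congrArg (fun x : ℕ => (x : ℚ)) h2
      push_cast at cast2
      linear_combination -cast2
    rw [e2]
    have hmQ : (0:ℚ) < (m : ℚ) := by exact_mod_cast hm
    have hs1 : (0:ℚ) < (s : ℚ) + 1 := by positivity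
    have final : 1 / ((m:ℚ) * ((m + s).choose s : ℚ))
        - 1 / (((s:ℚ) + 1) * ((m + (s + 1)).choose (s + 1) : ℚ))
        = 1 / ((m:ℚ) * ((m + (s + 1)).choose (s + 1) : ℚ)) := by
      rw [div_sub_div _ _ (mul_pos hmQ hA).ne' (mul_pos hs1 hC).ne',
        div_eq_div_iff (mul_pos (mul_pos hmQ hA) (mul_pos hs1 hC)).ne'
          (mul_pos hmQ hC).ne']
      linear_combination (-((m:ℚ) * ((m + (s + 1)).choose (s + 1) : ℚ))) * e1
    linear_combination final

/-- the classical lemma: `m·C(k,m) ∣ lcm(1,…,k)` for `1 ≤ m ≤ k`. -/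
lemma mul_choose_dvd_D {m k : ℕ} (hm : 1 ≤ m) (hmk : m ≤ k) :
    m * k.choose m ∣ D k := by
  set s := k - m with hs
  have hk : k = m + s := by omega
  have hsym : k.choose m = (m + s).choose s := by
    rw [hk, Nat.choose_symm_add]
  have hpos : 0 < m * k.choose m := by
    apply Nat.mul_pos hm (Nat.choose_pos hmk)
  apply nat_dvd_of_isIntQ_div hpos
  have key := apery_inv_sum s m hm
  have expand : ((D k : ℕ) : ℚ) / ((m * k.choose m : ℕ) : ℚ)
      = ∑ j ∈ Finset.range (s + 1),
          (-1 : ℚ) ^ j * (s.choose j : ℚ) * (((D k : ℕ) : ℚ) / (((m + j : ℕ) : ℕ) : ℚ)) := by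
    push_cast
    rw [hsym]
    push_cast
    rw [div_eq_mul_one_div, ← key, Finset.mul_sum]
    apply Finset.sum_congr rfl
    intro j _
    ring
  rw [expand]
  apply IsIntQ.sum
  intro j hj
  rw [Finset.mem_range] at hj
  have hdvd : (m + j) ∣ D k := dvd_D (by omega) (by omega)
  exact ((IsIntQ.neg_one_pow j).mul (IsIntQ.natCast _)).mul (IsIntQ.div_of_dvd hdvd)

/-- parity: `2 ∣ C(n,k)·C(n+k,k)` for `1 ≤ k ≤ n`. -/
lemma two_dvd_choose_mul {n k : ℕ} (hk : 1 ≤ k) (hkn : k ≤ n) :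
    2 ∣ n.choose k * (n + k).choose k := by
  have h := Nat.choose_mul (n := n + k) (k := 2 * k) (s := k) (by omega)
  -- C(n+k, 2k) * C(2k, k) = C(n+k, k) * C(n, k)
  have h2 : (n + k).choose (2 * k) * (2 * k).choose k
      = (n + k).choose k * n.choose k := by
    rw [h]
    congr 2 <;> omega
  have h3 : 2 ∣ (2 * k).choose k := by
    have := Nat.two_dvd_centralBinom_of_one_le hk
    rwa [Nat.centralBinom_eq_two_mul_choose] at this
  have : 2 ∣ (n + k).choose k * n.choose k := by
    rw [← h2]
    exact Dvd.dvd.mul_left h3 _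
  rwa [mul_comm] at this

/-- main divisibility for the second inner sum. -/
lemma key_dvd {n k m : ℕ} (hm : 1 ≤ m) (hmk : m ≤ k) (hkn : k ≤ n) :
    2 * m ^ 3 * n.choose m * (n + m).choose m
      ∣ D n ^ 3 * n.choose k ^ 2 * (n + k).choose k ^ 2 := by
  have hDk : D k ∣ D n := D_dvd_D hkn
  have hckm : m * k.choose m ∣ D n := (mul_choose_dvd_D hm hmk).trans hDk
  -- h1 : m * C(n,m) ∣ D n * C(n,k)
  have i1 : n.choose k * k.choose m = n.choose m * (n - m).choose (k - m) :=
    Nat.choose_mul hmk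
  have h1 : m * n.choose m ∣ n.choose k * D n := by
    calc m * n.choose m ∣ n.choose k * (m * k.choose m) :=
          ⟨(n - m).choose (k - m), by
            rw [show n.choose k * (m * k.choose m) = m * (n.choose k * k.choose m) by ring, i1]
            ring⟩
      _ ∣ n.choose k * D n := Nat.mul_dvd_mul_left _ hckm
  -- h2 : m * C(n+m,m) ∣ C(n+k,k) * D n
  have i2 : (n + k).choose k * k.choose m = (n + k).choose (k - m) * (n + m).choose m := by
    have h := Nat.choose_mul (n := n + k) (k := k) (s := k - m) (by omega)
    rw [Nat.choose_symm hmk] at h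
    rw [h]
    congr 2 <;> omega
  have h2 : m * (n + m).choose m ∣ (n + k).choose k * D n := by
    calc m * (n + m).choose m ∣ (n + k).choose k * (m * k.choose m) :=
          ⟨(n + k).choose (k - m), by
            rw [show (n + k).choose k * (m * k.choose m)
                = m * ((n + k).choose k * k.choose m) by ring, i2]
            ring⟩
      _ ∣ (n + k).choose k * D n := Nat.mul_dvd_mul_left _ hckm
  have h4 : 2 ∣ n.choose k * (n + k).choose k := two_dvd_choose_mul (le_trans hm hmk) hkn
  have hmD : m ∣ D n := dvd_D hm (hmk.trans hkn)
  have big := mul_dvd_mul (mul_dvd_mul (mul_dvd_mul h4 h1) h2) hmD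
  have e_l : 2 * m ^ 3 * n.choose m * (n + m).choose m
      = 2 * (m * n.choose m) * (m * (n + m).choose m) * m := by ring
  have e_r : D n ^ 3 * n.choose k ^ 2 * (n + k).choose k ^ 2
      = n.choose k * (n + k).choose k * (n.choose k * D n) * ((n + k).choose k * D n) * D n := by
    ring
  rw [e_l, e_r]
  exact big


/-- The second Apéry sequence
`âₙ = Σ_{k=0}^n (n choose k)²((n+k) choose k)²·(Σ_{m=1}^n 1/m³ +
Σ_{m=1}^k (−1)^{m−1}/(2m³ (n choose m)((n+m) choose n)))`. -/
def aperyHat (n : ℕ) : ℚ :=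
  ∑ k ∈ Finset.range (n + 1), ((n.choose k : ℚ)) ^ 2 * (((n + k).choose k : ℚ)) ^ 2 *
    ((∑ m ∈ Finset.Icc 1 n, 1 / (m : ℚ) ^ 3) +
     ∑ m ∈ Finset.Icc 1 k,
       (-1 : ℚ) ^ (m - 1) / (2 * (m : ℚ) ^ 3 * (n.choose m : ℚ) * ((n + m).choose n : ℚ)))

/-- For every `n ≥ 0`, `D n ³ · âₙ` is an integer. -/
theorem Dn_cubed_mul_aperyHat_isInt (n : ℕ) :
    ∃ m : ℤ, (D n : ℚ) ^ 3 * aperyHat n = (m : ℚ) := by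
  have H : IsIntQ ((D n : ℚ) ^ 3 * aperyHat n) := by
    rw [aperyHat, Finset.mul_sum]
    apply IsIntQ.sum
    intro k hk
    rw [Finset.mem_range] at hk
    have hkn : k ≤ n := by omega
    simp only [mul_add, Finset.mul_sum]
    apply IsIntQ.add
    · apply IsIntQ.sum
      intro m hm
      rw [Finset.mem_Icc] at hm
      have hdvd : m ^ 3 ∣ D n ^ 3 * n.choose k ^ 2 * (n + k).choose k ^ 2 :=
        ((pow_dvd_pow_of_dvd (dvd_D hm.1 hm.2) 3).mul_right _).mul_right _
      have heq : (D n : ℚ) ^ 3 * ((n.choose k : ℚ) ^ 2 * ((n + k).choose k : ℚ) ^ 2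
            * (1 / (m : ℚ) ^ 3))
          = ((D n ^ 3 * n.choose k ^ 2 * (n + k).choose k ^ 2 : ℕ) : ℚ)
            / ((m ^ 3 : ℕ) : ℚ) := by
        push_cast
        ring
      rw [heq]
      exact IsIntQ.div_of_dvd hdvd
    · apply IsIntQ.sum
      intro m hm
      rw [Finset.mem_Icc] at hm
      have hdvd : 2 * m ^ 3 * n.choose m * (n + m).choose m
          ∣ D n ^ 3 * n.choose k ^ 2 * (n + k).choose k ^ 2 :=
        key_dvd hm.1 hm.2 hkn
      have hsymm : (n + m).choose n = (n + m).choose m := Nat.choose_symm_add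
      have heq : (D n : ℚ) ^ 3 * ((n.choose k : ℚ) ^ 2 * ((n + k).choose k : ℚ) ^ 2
            * ((-1 : ℚ) ^ (m - 1)
              / (2 * (m : ℚ) ^ 3 * (n.choose m : ℚ) * ((n + m).choose n : ℚ))))
          = (-1 : ℚ) ^ (m - 1)
            * (((D n ^ 3 * n.choose k ^ 2 * (n + k).choose k ^ 2 : ℕ) : ℚ)
              / ((2 * m ^ 3 * n.choose m * (n + m).choose m : ℕ) : ℚ)) := by
        rw [hsymm]
        push_cast
        ring
      rw [heq]
      exact (IsIntQ.neg_one_pow _).mul (IsIntQ.div_of_dvd hdvd)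
  obtain ⟨z, hz⟩ := H
  exact ⟨z, hz⟩
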